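/- Let X and Y be compact Hausdorff spaces equipped with finite regular Borel measures μ_X and μ_Y, and let ψ : C(Y,ℂ) → C(X,ℂ) be a unital *-algebra homomorphism between the algebras of continuous complex-valued functions. Then there exists a unique continuous map f : X → Y with ψ(g) = g ∘ f for all g ∈ C(Y,ℂ); moreover, if there exists M > 0 such that ∫_X ψ(g) dμ_X ≤ M·∫_Y g dμ_Y for every continuous g : Y → ℝ≥0 (viewed in C(Y,ℂ)), then μ_X(f⁻¹(A)) ≤ M·μ_Y(A) for every Borel set A ⊆ Y, i.e. f is a bounded measurable map. (This is the fullness of the functor C : BMS → CCMS^op in the categorical Gelfand duality for measure spaces.) -/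

import Mathlib

open MeasureTheory ComplexOrder

open WeakDual WeakDual.CharacterSpace in
/-- Existence of the continuous map implementing a unital star-homomorphism. -/
lemma stmt_10_exists {X Y : Type*}
    [TopologicalSpace X] [CompactSpace X] [T2Space X]
    [TopologicalSpace Y] [CompactSpace Y] [T2Space Y]
    (ψ : C(Y, ℂ) →⋆ₐ[ℂ] C(X, ℂ)) :
    ∃ f : C(X, Y), ∀ g : C(Y, ℂ), ψ g = g.comp f := by
  refine ⟨(⟨_, (homeoEval Y ℂ).symm.continuous⟩ : C(_, Y)).comp
    ((compContinuousMap ψ).comp (⟨_, (homeoEval X ℂ).continuous⟩ : C(X, _))), fun g => ?_⟩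
  ext x
  show (ψ g) x = g ((homeoEval Y ℂ).symm ((compContinuousMap ψ) ((homeoEval X ℂ) x)))
  have h2 : g ((homeoEval Y ℂ).symm ((compContinuousMap ψ) ((homeoEval X ℂ) x)))
      = ((homeoEval Y ℂ) ((homeoEval Y ℂ).symm ((compContinuousMap ψ) ((homeoEval X ℂ) x)))) g :=
    rfl
  rw [h2, Homeomorph.apply_symm_apply]
  rfl

open WeakDual WeakDual.CharacterSpace in
/-- Uniqueness of the continuous map. -/
lemma stmt_10_unique {X Y : Type*}
    [TopologicalSpace X] [CompactSpace X] [T2Space X]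
    [TopologicalSpace Y] [CompactSpace Y] [T2Space Y]
    (f f' : C(X, Y)) (h : ∀ g : C(Y, ℂ), g.comp f = g.comp f') : f = f' := by
  ext x
  have key : continuousMapEval Y ℂ (f x) = continuousMapEval Y ℂ (f' x) := by
    ext g
    simpa using congrArg (fun u => ContinuousMap.toFun u x) (h g)
  exact (continuousMapEval_bijective Y ℂ).injective key

/-- Fullness of the functor `C : BMS → CCMS^op`: every unital `*`-homomorphism
`ψ : C(Y,ℂ) → C(X,ℂ)` is composition with a unique continuous map `f : X → Y`, and if
`ψ` is bounded with constant `M` on nonnegative continuous functions (at the level of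
integrals), then `f` is a bounded measurable map with the same constant. -/
theorem stmt_10 {X Y : Type*}
    [TopologicalSpace X] [CompactSpace X] [T2Space X] [MeasurableSpace X] [BorelSpace X]
    [TopologicalSpace Y] [CompactSpace Y] [T2Space Y] [MeasurableSpace Y] [BorelSpace Y]
    (μX : Measure X) (μY : Measure Y)
    [IsFiniteMeasure μX] [IsFiniteMeasure μY] [μX.Regular] [μY.Regular]
    (ψ : C(Y, ℂ) →⋆ₐ[ℂ] C(X, ℂ)) :
    (∃! f : C(X, Y), ∀ g : C(Y, ℂ), ψ g = g.comp f) ∧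
    (∀ f : C(X, Y), (∀ g : C(Y, ℂ), ψ g = g.comp f) →
      ∀ M : ℝ, 0 < M →
        (∀ g : C(Y, ℝ), (∀ y, 0 ≤ g y) →
          ∫ x, ψ (ContinuousMap.mk (fun y => (g y : ℂ))
              (Complex.continuous_ofReal.comp g.continuous)) x ∂μX ≤
            (M : ℂ) * ∫ y, (g y : ℂ) ∂μY) →
        ∀ A : Set Y, MeasurableSet A → μX (f ⁻¹' A) ≤ ENNReal.ofReal M * μY A) := by
  constructor
  · obtain ⟨f, hf⟩ := stmt_10_exists ψ
    exact ⟨f, hf, fun f' hf' => stmt_10_unique f' f fun g => by rw [← hf g, ← hf' g]⟩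
  · intro f hcomp M hM hbound A hA
    -- real form of the boundedness hypothesis
    have hreal : ∀ g : C(Y, ℝ), (∀ y, 0 ≤ g y) →
        ∫ x, g (f x) ∂μX ≤ M * ∫ y, g y ∂μY := by
      intro g hg
      have := hbound g hg
      rw [hcomp] at this
      have h1 : ∫ x, (ContinuousMap.mk (fun y => (g y : ℂ))
          (Complex.continuous_ofReal.comp g.continuous)).comp f x ∂μX
          = ((∫ x, g (f x) ∂μX : ℝ) : ℂ) := by
        simp only [ContinuousMap.comp_apply, ContinuousMap.coe_mk]
        exact integral_ofReal
      have h2 : ∫ y, (g y : ℂ) ∂μY = ((∫ y, g y ∂μY : ℝ) : ℂ) := integral_ofReal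
      rw [h1, h2, ← Complex.ofReal_mul] at this
      exact Complex.real_le_real.mp this
    -- integrability facts
    have hint : ∀ g : C(Y, ℝ), Integrable (fun x => g (f x)) μX := fun g =>
      (g.continuous.comp f.continuous).integrable_of_hasCompactSupport
        (HasCompactSupport.of_compactSpace _)
    have hintY : ∀ g : C(Y, ℝ), Integrable (fun y => g y) μY := fun g =>
      g.continuous.integrable_of_hasCompactSupport (HasCompactSupport.of_compactSpace _)
    -- key step: compact inside open
    have key : ∀ (K : Set X), IsCompact K → ∀ (U : Set Y), IsOpen U → f '' K ⊆ U →
        μX K ≤ ENNReal.ofReal M * μY U := by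
      intro K hK U hU hKU
      obtain ⟨g, hg0, hg1, hg01⟩ := exists_continuous_zero_one_of_isClosed
        hU.isClosed_compl ((hK.image f.continuous).isClosed) (by
          rw [Set.disjoint_compl_left_iff_subset]; exact hKU)
      have hgnn : ∀ y, 0 ≤ g y := fun y => (hg01 y).1
      -- μX K ≤ ∫ g ∘ f
      have hstep1 : (μX K).toReal ≤ ∫ x, g (f x) ∂μX := by
        have : (μX K).toReal = ∫ x, K.indicator (1 : X → ℝ) x ∂μX := by
          rw [integral_indicator_one hK.measurableSet, measureReal_def]
        rw [this]
        refine integral_mono ((integrable_indicator_iff hK.measurableSet).mpr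
          (integrableOn_const (measure_lt_top _ _).ne)) (hint g) fun x => ?_
        by_cases hx : x ∈ K
        · simp [Set.indicator_of_mem hx, hg1 (Set.mem_image_of_mem f hx)]
        · simp only [Set.indicator_of_notMem hx]; exact hgnn (f x)
      -- ∫ g ≤ μY U
      have hstep2 : ∫ y, g y ∂μY ≤ (μY U).toReal := by
        have : (μY U).toReal = ∫ y, U.indicator (1 : Y → ℝ) y ∂μY := by
          rw [integral_indicator_one hU.measurableSet, measureReal_def]
        rw [this]
        refine integral_mono (hintY g) ((integrable_indicator_iff hU.measurableSet).mpr
          (integrableOn_const (measure_lt_top _ _).ne)) fun y => ?_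
        by_cases hy : y ∈ U
        · simpa [Set.indicator_of_mem hy] using (hg01 y).2
        · simp only [Set.indicator_of_notMem hy]
          have : g y = 0 := hg0 hy
          simp [this]
      have hfinal : (μX K).toReal ≤ M * (μY U).toReal :=
        hstep1.trans ((hreal g hgnn).trans (by
          exact mul_le_mul_of_nonneg_left hstep2 hM.le))
      calc μX K = ENNReal.ofReal (μX K).toReal :=
            (ENNReal.ofReal_toReal (measure_ne_top _ _)).symm
        _ ≤ ENNReal.ofReal (M * (μY U).toReal) := ENNReal.ofReal_le_ofReal hfinal
        _ = ENNReal.ofReal M * ENNReal.ofReal (μY U).toReal :=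
            ENNReal.ofReal_mul hM.le
        _ = ENNReal.ofReal M * μY U := by
            rw [ENNReal.ofReal_toReal (measure_ne_top _ _)]
    -- step for open sets
    have hopen : ∀ (U : Set Y), IsOpen U → A ⊆ U →
        μX (f ⁻¹' A) ≤ ENNReal.ofReal M * μY U := by
      intro U hU hAU
      have h1 : μX (f ⁻¹' A) ≤ μX (f ⁻¹' U) := measure_mono (Set.preimage_mono hAU)
      refine h1.trans ?_
      rw [(hU.preimage f.continuous).measure_eq_iSup_isCompact]
      refine iSup_le fun K => iSup_le fun hKsub => iSup_le fun hKc => ?_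
      exact key K hKc U hU (Set.image_subset_iff.mpr hKsub)
    -- epsilon argument
    refine ENNReal.le_of_forall_pos_le_add fun ε hε _ => ?_
    have hMne : ENNReal.ofReal M ≠ 0 := by
      simp [ENNReal.ofReal_eq_zero, not_le, hM]
    have hMnetop : ENNReal.ofReal M ≠ ⊤ := ENNReal.ofReal_ne_top
    have hεne : (ε : ENNReal) / ENNReal.ofReal M ≠ 0 := by
      simp [ENNReal.div_eq_zero_iff, hMnetop, hε.ne']
    obtain ⟨U, hAU, hUopen, hUle⟩ := A.exists_isOpen_le_add μY hεne
    calc μX (f ⁻¹' A) ≤ ENNReal.ofReal M * μY U := hopen U hUopen hAU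
      _ ≤ ENNReal.ofReal M * (μY A + ε / ENNReal.ofReal M) :=
          mul_le_mul_right hUle _
      _ = ENNReal.ofReal M * μY A + ENNReal.ofReal M * (ε / ENNReal.ofReal M) := by
          rw [mul_add]
      _ = ENNReal.ofReal M * μY A + ε := by
          rw [ENNReal.mul_div_cancel hMne hMnetop]
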